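/- Let T be a right R-module with Gen T = T^{⊥₁}. Then Add T = Gen T ∩ ^{⊥₁}(Gen T), i.e. a module M lies in Add T if and only if M is generated by T and Ext^1_R(M, N) = 0 for all T-generated modules N. -/

import Mathlib

universe u

/-- `Ext^1_R(M, X) = 0`, expressed by the splitting of all short exact sequences
`0 → X → Y → M → 0`. -/
def Ext1Zero (R : Type u) [Ring R] (M X : Type u) [AddCommGroup M] [Module R M]
    [AddCommGroup X] [Module R X] : Prop :=
  ∀ (Y : Type u) [AddCommGroup Y] [Module R Y] (i : X →ₗ[R] Y) (p : Y →ₗ[R] M),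
    Function.Injective i → Function.Surjective p →
    LinearMap.range i = LinearMap.ker p →
    ∃ s : M →ₗ[R] Y, p.comp s = LinearMap.id

/-- `M ∈ Gen T`: `M` is an epimorphic image of a direct sum of copies of `T`. -/
def MemGen (R : Type u) [Ring R] (T M : Type u) [AddCommGroup T] [Module R T]
    [AddCommGroup M] [Module R M] : Prop :=
  ∃ (ι : Type u) (g : (ι →₀ T) →ₗ[R] M), Function.Surjective g

/-- `M ∈ Add T`: `M` is a direct summand of a direct sum of copies of `T`. -/
def MemAdd (R : Type u) [Ring R] (T M : Type u) [AddCommGroup T] [Module R T]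
    [AddCommGroup M] [Module R M] : Prop :=
  ∃ (ι : Type u) (s : M →ₗ[R] (ι →₀ T)) (p : (ι →₀ T) →ₗ[R] M), p.comp s = LinearMap.id

theorem ext1_lift {R X N Y M : Type u} [Ring R] [AddCommGroup X] [Module R X]
    [AddCommGroup N] [Module R N] [AddCommGroup Y] [Module R Y]
    [AddCommGroup M] [Module R M]
    (hX : Ext1Zero R X N) (i : N →ₗ[R] Y) (p : Y →ₗ[R] M)
    (hi : Function.Injective i) (hp : Function.Surjective p)
    (hker : LinearMap.range i = LinearMap.ker p) (φ : X →ₗ[R] M) :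
    ∃ ψ : X →ₗ[R] Y, p.comp ψ = φ := by
  set P : Submodule R (X × Y) :=
    LinearMap.ker ((p.comp (LinearMap.snd R X Y)) - (φ.comp (LinearMap.fst R X Y))) with hP
  have hmem : ∀ z : X × Y, z ∈ P ↔ p z.2 = φ z.1 := by
    intro z
    simp [hP, LinearMap.mem_ker, sub_eq_zero]
  have hi'mem : ∀ n : N, ((0 : X), i n) ∈ P := by
    intro n
    rw [hmem]
    have : i n ∈ LinearMap.ker p := hker ▸ LinearMap.mem_range_self i n
    simp [LinearMap.mem_ker.mp this]
  set i' : N →ₗ[R] P := (LinearMap.prod 0 i).codRestrict P hi'mem with hi'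
  set p' : P →ₗ[R] X := (LinearMap.fst R X Y).comp P.subtype with hp'
  have hi'inj : Function.Injective i' := by
    intro a b hab
    apply hi
    have := congrArg (fun z : P => (z : X × Y).2) hab
    exact this
  have hp'surj : Function.Surjective p' := by
    intro x
    obtain ⟨y, hy⟩ := hp (φ x)
    exact ⟨⟨(x, y), (hmem _).mpr hy⟩, rfl⟩
  have hker' : LinearMap.range i' = LinearMap.ker p' := by
    ext z
    constructor
    · rintro ⟨n, rfl⟩
      exact LinearMap.mem_ker.mpr rfl
    · intro hz
      have hz1 : (z : X × Y).1 = 0 := hz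
      have hz2 : p (z : X × Y).2 = 0 := by
        have := (hmem _).mp z.2
        rw [hz1] at this
        simpa using this
      obtain ⟨n, hn⟩ := hker ▸ (LinearMap.mem_ker.mpr hz2 : (z : X × Y).2 ∈ LinearMap.ker p)
      refine ⟨n, Subtype.ext ?_⟩
      show ((LinearMap.prod 0 i) n : X × Y) = (z : X × Y)
      refine Prod.ext ?_ ?_
      · simpa using hz1.symm
      · simpa using hn
  obtain ⟨s, hs⟩ := hX P i' p' hi'inj hp'surj hker'
  refine ⟨(LinearMap.snd R X Y).comp (P.subtype.comp s), ?_⟩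
  ext x
  have h1 : p' (s x) = x := DFunLike.congr_fun hs x
  have h2 : p ((s x : X × Y).2) = φ ((s x : X × Y).1) := (hmem _).mp (s x).2
  simpa [h1] using h2.trans (by rw [show ((s x : X × Y)).1 = x from h1])

theorem ext1_finsupp {R T N : Type u} [Ring R] [AddCommGroup T] [Module R T]
    [AddCommGroup N] [Module R N] (ι : Type u) (h : Ext1Zero R T N) :
    Ext1Zero R (ι →₀ T) N := by
  intro Y _ _ i p hi hp hker
  choose ψ hψ using fun j : ι => ext1_lift h i p hi hp hker (Finsupp.lsingle j)
  refine ⟨Finsupp.lsum ℕ ψ, ?_⟩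
  ext j t
  have h2 : p ((ψ j) t) = Finsupp.single j t := by
    simpa using DFunLike.congr_fun (hψ j) t
  simp [h2]

theorem ext1_retract {R M F N : Type u} [Ring R] [AddCommGroup M] [Module R M]
    [AddCommGroup F] [Module R F] [AddCommGroup N] [Module R N]
    (s : M →ₗ[R] F) (q : F →ₗ[R] M) (hqs : q.comp s = LinearMap.id)
    (hF : Ext1Zero R F N) : Ext1Zero R M N := by
  intro Y _ _ i p hi hp hker
  obtain ⟨ψ, hψ⟩ := ext1_lift hF i p hi hp hker q
  exact ⟨ψ.comp s, by rw [← LinearMap.comp_assoc, hψ, hqs]⟩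

theorem ext1_ker {R T M F : Type u} [Ring R] [AddCommGroup T] [Module R T]
    [AddCommGroup M] [Module R M] [AddCommGroup F] [Module R F]
    (hFT : Ext1Zero R T F) (g : F →ₗ[R] M)
    (hlift : ∀ h : T →ₗ[R] M, ∃ e : T →ₗ[R] F, g.comp e = h) :
    Ext1Zero R T (LinearMap.ker g) := by
  intro Y _ _ i p hi hp hker
  set j : (LinearMap.ker g) →ₗ[R] F := (LinearMap.ker g).subtype with hj
  set W : Submodule R (F × Y) := LinearMap.range (LinearMap.prod j (-i)) with hW
  have hWmem : ∀ z : F × Y, z ∈ W ↔ ∃ k : LinearMap.ker g, j k = z.1 ∧ -(i k) = z.2 := by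
    intro z
    constructor
    · rintro ⟨k, rfl⟩; exact ⟨k, rfl, rfl⟩
    · rintro ⟨k, h1, h2⟩
      exact ⟨k, Prod.ext (by simpa using h1) (by simpa using h2)⟩
  have hπle : W ≤ LinearMap.ker (p.comp (LinearMap.snd R F Y)) := by
    rintro z ⟨k, rfl⟩
    have : i k ∈ LinearMap.ker p := hker ▸ LinearMap.mem_range_self i k
    simp [LinearMap.mem_ker.mp this]
  have hρle : W ≤ LinearMap.ker (g.comp (LinearMap.fst R F Y)) := by
    rintro z ⟨k, rfl⟩
    simpa [hj] using k.2
  set π : ((F × Y) ⧸ W) →ₗ[R] T := W.liftQ (p.comp (LinearMap.snd R F Y)) hπle with hπ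
  set ρ : ((F × Y) ⧸ W) →ₗ[R] M := W.liftQ (g.comp (LinearMap.fst R F Y)) hρle with hρ
  set ιF : F →ₗ[R] ((F × Y) ⧸ W) := W.mkQ.comp (LinearMap.inl R F Y) with hιF
  set ιY : Y →ₗ[R] ((F × Y) ⧸ W) := W.mkQ.comp (LinearMap.inr R F Y) with hιY
  have hπιY : ∀ y : Y, π (ιY y) = p y := by intro y; simp [hπ, hιY]
  have hπιF : ∀ f : F, π (ιF f) = 0 := by intro f; simp [hπ, hιF]
  have hριF : ∀ f : F, ρ (ιF f) = g f := by intro f; simp [hρ, hιF]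
  have hιFeq : ∀ f : F, ιF f = W.mkQ (f, 0) := fun f => rfl
  have hιYeq : ∀ y : Y, ιY y = W.mkQ (0, y) := fun y => rfl
  have hιFinj : Function.Injective ιF := by
    rw [← LinearMap.ker_eq_bot]
    refine (Submodule.eq_bot_iff _).mpr ?_
    intro f hf
    have hf' : ιF f = 0 := hf
    rw [hιFeq, Submodule.mkQ_apply, Submodule.Quotient.mk_eq_zero] at hf'
    obtain ⟨k, h1, h2⟩ := (hWmem _).mp hf'
    have hk0 : k = 0 := by
      apply hi
      rw [map_zero]
      simpa [neg_eq_zero] using h2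
    rw [hk0] at h1
    simpa [hj] using h1.symm
  have hιYinj : Function.Injective ιY := by
    rw [← LinearMap.ker_eq_bot]
    refine (Submodule.eq_bot_iff _).mpr ?_
    intro y hy
    have hy' : ιY y = 0 := hy
    rw [hιYeq, Submodule.mkQ_apply, Submodule.Quotient.mk_eq_zero] at hy'
    obtain ⟨k, h1, h2⟩ := (hWmem _).mp hy'
    have hk0 : k = 0 := by
      have hc : (k : F) = 0 := by simpa [hj] using h1
      exact Subtype.ext hc
    rw [hk0] at h2
    simpa using h2.symm
  have hπsurj : Function.Surjective π := by
    intro t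
    obtain ⟨y, hy⟩ := hp t
    exact ⟨ιY y, by rw [hπιY, hy]⟩
  have hkerπ : LinearMap.range ιF = LinearMap.ker π := by
    ext z
    constructor
    · rintro ⟨f, rfl⟩
      exact LinearMap.mem_ker.mpr (hπιF f)
    · intro hz
      obtain ⟨⟨f, y⟩, rfl⟩ := W.mkQ_surjective z
      have hpy : p y = 0 := by
        have h0 : π (W.mkQ (f, y)) = p y := by simp [hπ]
        rw [← h0]; exact hz
      obtain ⟨n, hn⟩ := hker ▸ (LinearMap.mem_ker.mpr hpy : y ∈ LinearMap.ker p)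
      refine ⟨f + j n, ?_⟩
      rw [hιFeq, Submodule.mkQ_apply, Submodule.mkQ_apply, Submodule.Quotient.eq]
      refine (hWmem _).mpr ⟨n, ?_, ?_⟩
      · simp
      · simp [hn]
  obtain ⟨σ, hσ⟩ := hFT ((F × Y) ⧸ W) ιF π hιFinj hπsurj hkerπ
  obtain ⟨e, he⟩ := hlift (ρ.comp σ)
  set δ : T →ₗ[R] ((F × Y) ⧸ W) := σ - ιF.comp e with hδ
  have hkerρ : ∀ z, ρ z = 0 → z ∈ LinearMap.range ιY := by
    intro z hz
    obtain ⟨⟨f, y⟩, rfl⟩ := W.mkQ_surjective z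
    have hgf : g f = 0 := by
      have h0 : ρ (W.mkQ (f, y)) = g f := by simp [hρ]
      rw [← h0]; exact hz
    refine ⟨y + i ⟨f, hgf⟩, ?_⟩
    rw [hιYeq, Submodule.mkQ_apply, Submodule.mkQ_apply, Submodule.Quotient.eq]
    refine (hWmem _).mpr ⟨-⟨f, hgf⟩, ?_, ?_⟩
    · simp [hj]
    · simp
  have hδmem : ∀ t, δ t ∈ LinearMap.range ιY := by
    intro t
    apply hkerρ
    have h1 : ρ (σ t) = g (e t) := (DFunLike.congr_fun he t).symm
    simp [hδ, h1, hριF]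
  set τ : T →ₗ[R] Y :=
    ((LinearEquiv.ofInjective ιY hιYinj).symm.toLinearMap).comp
      (δ.codRestrict (LinearMap.range ιY) hδmem) with hτdef
  have hτ : ∀ t, ιY (τ t) = δ t := by
    intro t
    have h1 := (LinearEquiv.ofInjective ιY hιYinj).apply_symm_apply
      ⟨δ t, hδmem t⟩
    have h2 := congrArg (Subtype.val) h1
    simpa [hτdef] using h2
  refine ⟨τ, ?_⟩
  ext t
  have h1 : π (ιY (τ t)) = p (τ t) := hπιY (τ t)
  have h2 : π (δ t) = t := by
    have hσt : π (σ t) = t := DFunLike.congr_fun hσ t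
    simp [hδ, hσt, hπιF]
  simp only [LinearMap.comp_apply, LinearMap.id_apply]
  rw [← h1, hτ t, h2]

theorem taut_surj {R T M : Type u} [Ring R] [AddCommGroup T] [Module R T]
    [AddCommGroup M] [Module R M] (hgen : MemGen R T M) :
    Function.Surjective (Finsupp.lsum ℕ (fun f : T →ₗ[R] M => f) :
      ((T →ₗ[R] M) →₀ T) →ₗ[R] M) := by
  set G : ((T →ₗ[R] M) →₀ T) →ₗ[R] M := Finsupp.lsum ℕ (fun f : T →ₗ[R] M => f) with hG
  obtain ⟨κ, g', hg'⟩ := hgen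
  intro m
  obtain ⟨x, rfl⟩ := hg' m
  suffices h : ∀ x : κ →₀ T, g' x ∈ LinearMap.range G by exact h x
  intro x
  induction x using Finsupp.induction_linear with
  | zero => simp
  | add a b ha hb => rw [map_add]; exact Submodule.add_mem _ ha hb
  | single j t =>
      refine ⟨Finsupp.single (g'.comp (Finsupp.lsingle j)) t, ?_⟩
      simp [hG]


/-- Let `T` be a tilting module, i.e. `Gen T = T^{⊥₁}`. Then
`Add T = Gen T ∩ ^{⊥₁}(Gen T)`: a module `M` lies in `Add T` iff `M` is generated by `T`
and `Ext^1_R(M, N) = 0` for every `T`-generated module `N`. -/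
theorem addT_eq_genT_inter_perp {R : Type u} [Ring R] (T : Type u) [AddCommGroup T]
    [Module R T]
    (htilt : ∀ (N : Type u) [AddCommGroup N] [Module R N], MemGen R T N ↔ Ext1Zero R T N) :
    ∀ (M : Type u) [AddCommGroup M] [Module R M],
      MemAdd R T M ↔
        (MemGen R T M ∧
          ∀ (N : Type u) [AddCommGroup N] [Module R N], MemGen R T N → Ext1Zero R M N) := by
  intro M _ _
  constructor
  · rintro ⟨ι, s, q, hqs⟩
    constructor
    · exact ⟨ι, q, fun m => ⟨s m, by simpa using DFunLike.congr_fun hqs m⟩⟩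
    · intro N _ _ hN
      exact ext1_retract s q hqs (ext1_finsupp ι ((htilt N).mp hN))
  · rintro ⟨hgen, hperp⟩
    set G : ((T →ₗ[R] M) →₀ T) →ₗ[R] M := Finsupp.lsum ℕ (fun f : T →ₗ[R] M => f) with hG
    have hGsurj : Function.Surjective G := taut_surj hgen
    have hlift : ∀ h : T →ₗ[R] M, ∃ e : T →ₗ[R] ((T →ₗ[R] M) →₀ T), G.comp e = h := by
      intro h
      refine ⟨Finsupp.lsingle h, ?_⟩
      ext t
      simp [hG]
    have hFgen : MemGen R T ((T →ₗ[R] M) →₀ T) :=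
      ⟨T →ₗ[R] M, LinearMap.id, Function.surjective_id⟩
    have hFT : Ext1Zero R T ((T →ₗ[R] M) →₀ T) := (htilt _).mp hFgen
    have hK : Ext1Zero R T (LinearMap.ker G) := ext1_ker hFT G hlift
    have hKgen : MemGen R T (LinearMap.ker G) := (htilt _).mpr hK
    have hMK : Ext1Zero R M (LinearMap.ker G) := hperp _ hKgen
    obtain ⟨s, hs⟩ := hMK ((T →ₗ[R] M) →₀ T) (LinearMap.ker G).subtype G
      (Submodule.injective_subtype _) hGsurj (Submodule.range_subtype _)
    exact ⟨T →ₗ[R] M, s, G, hs⟩
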